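/- Let ρ₀, ρ₁ be density operators on H_enc, |m⟩ a fixed unit ancilla state orthogonal to the output state |x_min⟩, and H = ∑ₙ Eₙ|Eₙ⟩⟨Eₙ| ≥ 0 a Hamiltonian on H_enc ⊗ H_anc, t ≥ 0, U = exp(-iHt). Let Pₓ := |x⟩⟨x| on H_anc. Then the success probability p_max·tr(U†(I⊗P_max)U ρ̃_max) + p_min·tr(U†(I⊗P_min)U ρ̃_min), with ρ̃ₓ := ρₓ⊗|m⟩⟨m| and |m⟩=|x_max⟩, is at most p_max + 2(1 - cos(t·C_max))·tr((p_min ρ_min - p_max ρ_max)⁺), where C_max maximizes (1 - cos(t·Eₙ)) over eigenvalues Eₙ of H. -/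

import Mathlib

open Matrix ComplexOrder

/-- The positive part `A⁺` of a Hermitian matrix `A`, obtained from its spectral
decomposition by keeping only the nonnegative eigenvalues. -/
noncomputable def posPart' {ι : Type*} [Fintype ι] [DecidableEq ι]
    (A : Matrix ι ι ℂ) (hA : A.IsHermitian) : Matrix ι ι ℂ :=
  (hA.eigenvectorUnitary : Matrix ι ι ℂ) *
    Matrix.diagonal (fun i => ((max (hA.eigenvalues i) 0 : ℝ) : ℂ)) *
    star (hA.eigenvectorUnitary : Matrix ι ι ℂ)
open Kronecker
set_option linter.unusedSectionVars false

open Matrix ComplexOrder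

section Aux
variable {ι : Type*} [Fintype ι] [DecidableEq ι]

lemma conj3_mul (V : Matrix ι ι ℂ) (hV : Vᴴ * V = 1) (a b : ι → ℂ) :
    (V * Matrix.diagonal a * Vᴴ) * (V * Matrix.diagonal b * Vᴴ)
      = V * Matrix.diagonal (a * b) * Vᴴ := by
  have : (V * Matrix.diagonal a * Vᴴ) * (V * Matrix.diagonal b * Vᴴ)
      = V * Matrix.diagonal a * (Vᴴ * V) * Matrix.diagonal b * Vᴴ := by
    noncomm_ring
  rw [this, hV, mul_one, mul_assoc V, mul_assoc V, Matrix.diagonal_mul_diagonal,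
    ← mul_assoc]
  rfl

lemma conj3_conjTranspose (V : Matrix ι ι ℂ) (a : ι → ℂ) :
    (V * Matrix.diagonal a * Vᴴ)ᴴ = V * Matrix.diagonal (star a) * Vᴴ := by
  simp [Matrix.conjTranspose_mul, Matrix.diagonal_conjTranspose, mul_assoc]

lemma trace_conj3 (V : Matrix ι ι ℂ) (hV : Vᴴ * V = 1) (a : ι → ℂ) :
    (V * Matrix.diagonal a * Vᴴ).trace = ∑ i, a i := by
  rw [Matrix.trace_mul_cycle, hV, one_mul, Matrix.trace_diagonal]

lemma conj3_eq_sum (V : Matrix ι ι ℂ) (a : ι → ℂ) :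
    V * Matrix.diagonal a * Vᴴ
      = ∑ i, a i • vecMulVec (fun j => V j i) (star fun j => V j i) := by
  ext j k
  simp only [Matrix.mul_apply, Matrix.diagonal_apply, Matrix.conjTranspose_apply,
    Matrix.sum_apply, Matrix.smul_apply, Matrix.vecMulVec_apply, Pi.star_apply,
    mul_ite, ite_mul, zero_mul, mul_zero, Finset.sum_ite_eq, Finset.sum_ite_eq',
    Finset.mem_univ, if_true, smul_eq_mul]
  exact Finset.sum_congr rfl fun i _ => by ring

lemma trace_mul_vecMulVec (M : Matrix ι ι ℂ) (x : ι → ℂ) :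
    (M * vecMulVec x (star x)).trace = star x ⬝ᵥ (M *ᵥ x) := by
  simp only [Matrix.trace, Matrix.diag_apply, Matrix.mul_apply, Matrix.vecMulVec_apply,
    Pi.star_apply, dotProduct, Matrix.mulVec, Finset.mul_sum]
  exact Finset.sum_congr rfl fun i _ => Finset.sum_congr rfl fun j _ => by ring

lemma proj_contract (P : Matrix ι ι ℂ) (hP1 : Pᴴ = P) (hP2 : P * P = P) (y : ι → ℂ) :
    star (P *ᵥ y) ⬝ᵥ (P *ᵥ y) ≤ star y ⬝ᵥ y := by
  have h1 : star (P *ᵥ y) ⬝ᵥ (P *ᵥ y) = star y ⬝ᵥ (P *ᵥ y) := by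
    rw [Matrix.star_mulVec, ← Matrix.dotProduct_mulVec, Matrix.mulVec_mulVec, hP1, hP2]
  have h2 : star ((1 - P) *ᵥ y) ⬝ᵥ ((1 - P) *ᵥ y) = star y ⬝ᵥ y - star y ⬝ᵥ (P *ᵥ y) := by
    rw [Matrix.star_mulVec, ← Matrix.dotProduct_mulVec, Matrix.mulVec_mulVec]
    have : (1 - P)ᴴ * (1 - P) = 1 - P := by
      rw [Matrix.conjTranspose_sub, Matrix.conjTranspose_one, hP1]
      rw [mul_sub, sub_mul, sub_mul, hP2]
      noncomm_ring
    rw [this, Matrix.sub_mulVec, Matrix.one_mulVec, dotProduct_sub]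
  have h3 := dotProduct_star_self_nonneg ((1 - P) *ᵥ y)
  rw [h2] at h3
  rw [h1]
  exact sub_nonneg.mp h3


lemma sum_kronecker' {m n κ : Type*} [Fintype m] [Fintype n] [Fintype κ]
    (A : κ → Matrix m m ℂ) (B : Matrix n n ℂ) :
    (∑ i, A i) ⊗ₖ B = ∑ i, (A i ⊗ₖ B) := by
  classical
  induction (Finset.univ : Finset κ) using Finset.induction with
  | empty => simp [Matrix.zero_kronecker]
  | insert _ _ h ih => simp [Finset.sum_insert h, Matrix.add_kronecker, ih]

lemma dot_conj {ι : Type*} [Fintype ι] (A : Matrix ι ι ℂ) (x : ι → ℂ) :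
    star x ⬝ᵥ ((Aᴴ * A) *ᵥ x) = star (A *ᵥ x) ⬝ᵥ (A *ᵥ x) := by
  rw [Matrix.star_mulVec, ← Matrix.dotProduct_mulVec, ← Matrix.mulVec_mulVec]

lemma conj3_sub {ι : Type*} [Fintype ι] [DecidableEq ι] (V : Matrix ι ι ℂ) (a b : ι → ℂ) :
    V * Matrix.diagonal a * Vᴴ - V * Matrix.diagonal b * Vᴴ
      = V * Matrix.diagonal (a - b) * Vᴴ := by
  rw [← Matrix.sub_mul, ← Matrix.mul_sub, Matrix.diagonal_sub]
  rfl

lemma conj3_smul {ι : Type*} [Fintype ι] [DecidableEq ι] (V : Matrix ι ι ℂ) (r : ℂ)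
    (a : ι → ℂ) : r • (V * Matrix.diagonal a * Vᴴ) = V * Matrix.diagonal (r • a) * Vᴴ := by
  rw [Matrix.diagonal_smul, ← smul_mul_assoc, ← mul_smul_comm]

lemma trace_proj_conj {ι : Type*} [Fintype ι] [DecidableEq ι] (P U' : Matrix ι ι ℂ) (x : ι → ℂ) :
    (P * (U' * vecMulVec x (star x) * U'ᴴ)).trace = star x ⬝ᵥ ((U'ᴴ * P * U') *ᵥ x) := by
  rw [show P * (U' * vecMulVec x (star x) * U'ᴴ)
      = (P * U' * vecMulVec x (star x)) * U'ᴴ by noncomm_ring,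
    Matrix.trace_mul_comm,
    show U'ᴴ * (P * U' * vecMulVec x (star x))
      = (U'ᴴ * P * U') * vecMulVec x (star x) by noncomm_ring,
    trace_mul_vecMulVec]

set_option maxHeartbeats 2000000 in

/-- Proto-bound for time-limited two-state discrimination: with the ancilla (basis
`{|0⟩ = |x_max⟩, |1⟩ = |x_min⟩}`) initialized to `|x_max⟩`, joint Hamiltonian
`H = ∑ₙ Eₙ|Eₙ⟩⟨Eₙ| ≥ 0`, and `U = exp(-iHt)`, the success probability is at most
`p_max + 2(1 - cos(t C_max)) tr((p_min ρ_min - p_max ρ_max)⁺)`, where `C_max`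
maximizes `1 - cos(t Eₙ)` over the eigenvalues of `H`. -/
theorem proto_two_state_bound {d : ℕ}
    (ρmax ρmin : Matrix (Fin d) (Fin d) ℂ)
    (hρmax : ρmax.PosSemidef) (hρmin : ρmin.PosSemidef)
    (htrmax : ρmax.trace = 1) (htrmin : ρmin.trace = 1)
    (pmax pmin : ℝ) (h0 : 0 ≤ pmin) (hp : pmin ≤ pmax) (hsum : pmax + pmin = 1)
    (t : ℝ) (ht : 0 ≤ t)
    (E : Fin d × Fin 2 → ℝ) (hE : ∀ n, 0 ≤ E n)
    (v : Fin d × Fin 2 → Fin d × Fin 2 → ℂ)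
    (hv : ∀ i j, star (v i) ⬝ᵥ v j = if i = j then 1 else 0)
    (H : Matrix (Fin d × Fin 2) (Fin d × Fin 2) ℂ)
    (hH : H = ∑ n, (E n : ℂ) • vecMulVec (v n) (star (v n)))
    (U : Matrix (Fin d × Fin 2) (Fin d × Fin 2) ℂ)
    (hU : U = NormedSpace.exp ((-(Complex.I * (t : ℂ))) • H))
    (Cmax : ℝ) (hC1 : ∃ n, Cmax = E n)
    (hC2 : ∀ n, 1 - Real.cos (t * E n) ≤ 1 - Real.cos (t * Cmax))
    (hD : ((pmin : ℂ) • ρmin - (pmax : ℂ) • ρmax).IsHermitian) :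
    (pmax : ℂ) * (((1 : Matrix (Fin d) (Fin d) ℂ) ⊗ₖ Matrix.single (0 : Fin 2) 0 (1 : ℂ)) *
          (U * (ρmax ⊗ₖ Matrix.single (0 : Fin 2) 0 (1 : ℂ)) * Uᴴ)).trace +
      (pmin : ℂ) * (((1 : Matrix (Fin d) (Fin d) ℂ) ⊗ₖ Matrix.single (1 : Fin 2) 1 (1 : ℂ)) *
          (U * (ρmin ⊗ₖ Matrix.single (0 : Fin 2) 0 (1 : ℂ)) * Uᴴ)).trace ≤
    (pmax : ℂ) + ((2 * (1 - Real.cos (t * Cmax)) : ℝ) : ℂ) *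
      (posPart' ((pmin : ℂ) • ρmin - (pmax : ℂ) • ρmax) hD).trace := by
  classical
  set c : ℝ := 2 * (1 - Real.cos (t * Cmax)) with hc
  have hc0 : 0 ≤ c := by
    have := Real.cos_le_one (t * Cmax); simp [hc]; linarith
  set E00 : Matrix (Fin 2) (Fin 2) ℂ := Matrix.single (0 : Fin 2) 0 (1 : ℂ) with hE00
  set E11 : Matrix (Fin 2) (Fin 2) ℂ := Matrix.single (1 : Fin 2) 1 (1 : ℂ) with hE11
  set P1 : Matrix (Fin d × Fin 2) (Fin d × Fin 2) ℂ :=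
    (1 : Matrix (Fin d) (Fin d) ℂ) ⊗ₖ E11 with hP1def
  set D : Matrix (Fin d) (Fin d) ℂ := (pmin : ℂ) • ρmin - (pmax : ℂ) • ρmax with hDdef
  -- the eigenvector matrix V of H
  set V : Matrix (Fin d × Fin 2) (Fin d × Fin 2) ℂ := Matrix.of fun i n => v n i with hVdef
  have hVV : Vᴴ * V = 1 := by
    ext n m
    simpa [hVdef, Matrix.mul_apply, Matrix.conjTranspose_apply, Matrix.one_apply,
      dotProduct] using hv n m
  have hVV' : V * Vᴴ = 1 := mul_eq_one_comm.mp hVV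
  have hHV : H = V * Matrix.diagonal (fun n => (E n : ℂ)) * Vᴴ := by
    rw [conj3_eq_sum]; exact hH
  set g : Fin d × Fin 2 → ℂ := fun n => Complex.exp (-(Complex.I * t) * E n) with hg
  have hUV : U = V * Matrix.diagonal g * Vᴴ := by
    have hunit : IsUnit V := ⟨⟨V, Vᴴ, hVV', hVV⟩, rfl⟩
    have hinv : V⁻¹ = Vᴴ := Matrix.inv_eq_right_inv hVV'
    have hsmul : (-(Complex.I * t)) • H
        = V * Matrix.diagonal (fun n => -(Complex.I * t) * E n) * Vᴴ := by
      rw [hHV, ← smul_mul_assoc, ← mul_smul_comm, ← Matrix.diagonal_smul]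
      congr 2
    rw [hU, hsmul, ← hinv, Matrix.exp_conj V _ hunit, hinv, Matrix.exp_diagonal,
      Pi.exp_def]
    simp only [hg, ← Complex.exp_eq_exp_ℂ]
  have hUconj : Uᴴ = V * Matrix.diagonal (star g) * Vᴴ := by
    rw [hUV, conj3_conjTranspose]
  have hgconj : ∀ n, (starRingEnd ℂ) (g n) = Complex.exp (Complex.I * t * E n) := by
    intro n
    rw [hg, ← Complex.exp_conj]
    congr 1
    simp only [_root_.map_mul, map_neg, Complex.conj_I, Complex.conj_ofReal]
    ring
  have hsg : star g * g = 1 := by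
    funext n
    simp only [Pi.mul_apply, Pi.star_apply, Pi.one_apply]
    rw [show (star (g n) : ℂ) = (starRingEnd ℂ) (g n) from rfl, hgconj n, hg,
      ← Complex.exp_add,
      show Complex.I * t * E n + -(Complex.I * t) * E n = 0 by ring, Complex.exp_zero]
  have hUU : Uᴴ * U = 1 := by
    rw [hUconj, hUV, conj3_mul V hVV, hsg]
    simp only [Pi.one_def, Matrix.diagonal_one, mul_one, hVV']
  -- projection facts
  have hP1herm : P1ᴴ = P1 := by
    ext ⟨i, k⟩ ⟨j, l⟩
    simp only [hP1def, Matrix.conjTranspose_apply, Matrix.kroneckerMap_apply,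
      Matrix.one_apply, hE11, Matrix.single, Matrix.of_apply]
    fin_cases k <;> fin_cases l <;> by_cases h : i = j <;> simp [h, eq_comm]
  have hP1idem : P1 * P1 = P1 := by
    rw [hP1def, ← Matrix.mul_kronecker_mul, one_mul, hE11, Matrix.single_mul_single_same,
      one_mul]
  -- trace linearity reduction of the LHS
  have htrU : ∀ A : Matrix (Fin d × Fin 2) (Fin d × Fin 2) ℂ,
      (U * A * Uᴴ).trace = A.trace := by
    intro A
    rw [Matrix.trace_mul_cycle, hUU, one_mul]
  have hE00E11 : E00 + E11 = 1 := by
    ext k l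
    fin_cases k <;> fin_cases l <;>
      simp [hE00, hE11, Matrix.single, Matrix.one_apply]
  have hPsum : (1 : Matrix (Fin d) (Fin d) ℂ) ⊗ₖ E00 = 1 - P1 := by
    rw [hP1def, eq_sub_iff_add_eq, ← Matrix.kronecker_add, hE00E11,
      Matrix.one_kronecker_one]
  -- LHS reduction
  have htrE00 : E00.trace = 1 := by
    simp [hE00, Matrix.trace, Matrix.single, Fin.sum_univ_two]
  have htrρE : (ρmax ⊗ₖ E00).trace = 1 := by
    rw [Matrix.trace_kronecker, htrmax, htrE00, one_mul]
  have hkronD : (D ⊗ₖ E00) = (pmin : ℂ) • (ρmin ⊗ₖ E00) - (pmax : ℂ) • (ρmax ⊗ₖ E00) := by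
    ext ⟨j, k⟩ ⟨j', k'⟩
    simp only [hDdef, Matrix.kroneckerMap_apply, Matrix.sub_apply, Matrix.smul_apply,
      smul_eq_mul]
    ring
  have hsplit : (P1 * (U * (D ⊗ₖ E00) * Uᴴ)).trace
      = (pmin : ℂ) * (P1 * (U * (ρmin ⊗ₖ E00) * Uᴴ)).trace
        - (pmax : ℂ) * (P1 * (U * (ρmax ⊗ₖ E00) * Uᴴ)).trace := by
    rw [hkronD]
    simp only [Matrix.mul_sub, Matrix.sub_mul, Matrix.mul_smul, Matrix.smul_mul,
      Matrix.trace_sub, Matrix.trace_smul, smul_eq_mul]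
  have hLHSeq : (pmax : ℂ) *
        (((1 : Matrix (Fin d) (Fin d) ℂ) ⊗ₖ E00) * (U * (ρmax ⊗ₖ E00) * Uᴴ)).trace
      + (pmin : ℂ) * (P1 * (U * (ρmin ⊗ₖ E00) * Uᴴ)).trace
      = (pmax : ℂ) + (P1 * (U * (D ⊗ₖ E00) * Uᴴ)).trace := by
    rw [hPsum, Matrix.sub_mul, one_mul, Matrix.trace_sub, htrU, htrρE, hsplit]
    ring
  rw [hLHSeq]
  -- spectral decomposition of D
  set W : Matrix (Fin d) (Fin d) ℂ := (hD.eigenvectorUnitary : Matrix (Fin d) (Fin d) ℂ)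
    with hWdef
  set lam : Fin d → ℝ := hD.eigenvalues with hlam
  have hWW : Wᴴ * W = 1 := by
    have h := hD.eigenvectorUnitary.2
    rw [Matrix.mem_unitaryGroup_iff'] at h
    exact h
  have hspec : D = W * Matrix.diagonal (fun i => (lam i : ℂ)) * Wᴴ :=
    hD.spectral_theorem
  have htrPos : (posPart' D hD).trace = ((∑ i, max (lam i) 0 : ℝ) : ℂ) := by
    have : posPart' D hD
        = W * Matrix.diagonal (fun i => ((max (lam i) 0 : ℝ) : ℂ)) * Wᴴ := rfl
    rw [this, trace_conj3 _ hWW]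
    push_cast
    rfl
  set φ : Fin d → (Fin d × Fin 2) → ℂ :=
    fun i p => W p.1 i * (if p.2 = 0 then 1 else 0) with hφ
  have hDkron : D ⊗ₖ E00 = ∑ i, (lam i : ℂ) • vecMulVec (φ i) (star (φ i)) := by
    rw [hspec, conj3_eq_sum, sum_kronecker']
    congr 1; funext i
    rw [Matrix.smul_kronecker]
    congr 1
    ext ⟨j, k⟩ ⟨j', k'⟩
    simp only [Matrix.kroneckerMap_apply, Matrix.vecMulVec_apply, hE00,
      Matrix.single, Matrix.of_apply, Pi.star_apply, hφ, star_mul']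
    fin_cases k <;> fin_cases k' <;> simp <;> ring
  -- trace as a sum over eigenvectors
  have hTsum : (P1 * (U * (D ⊗ₖ E00) * Uᴴ)).trace
      = ∑ i, (lam i : ℂ) * (star (φ i) ⬝ᵥ ((Uᴴ * P1 * U) *ᵥ (φ i))) := by
    rw [hDkron, Matrix.mul_sum, Matrix.sum_mul, Matrix.mul_sum, Matrix.trace_sum]
    congr 1; funext i
    rw [Matrix.mul_smul, Matrix.smul_mul, Matrix.mul_smul, Matrix.trace_smul, smul_eq_mul]
    rw [← trace_proj_conj P1 U (φ i)]
  -- positivity and the operator bound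
  have hUPU : Uᴴ * P1 * U = (P1 * U)ᴴ * (P1 * U) := by
    calc Uᴴ * P1 * U = Uᴴ * (P1 * P1) * U := by rw [hP1idem]
    _ = Uᴴ * P1ᴴ * (P1 * U) := by rw [hP1herm]; noncomm_ring
    _ = (P1 * U)ᴴ * (P1 * U) := by rw [Matrix.conjTranspose_mul]
  have hq0 : ∀ i, 0 ≤ star (φ i) ⬝ᵥ ((Uᴴ * P1 * U) *ᵥ (φ i)) := by
    intro i
    rw [hUPU, dot_conj]
    exact dotProduct_star_self_nonneg _
  have hφ0 : ∀ i, P1 *ᵥ φ i = 0 := by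
    intro i
    funext ⟨j, k⟩
    simp [Matrix.mulVec, dotProduct, hP1def, Matrix.kroneckerMap_apply, hE11,
      Matrix.single, hφ, Fintype.sum_prod_type, Fin.sum_univ_two,
      Matrix.one_apply]
  have hφnorm : ∀ i, star (φ i) ⬝ᵥ φ i = 1 := by
    intro i
    have h := congrFun (congrFun hWW i) i
    simp only [Matrix.mul_apply, Matrix.one_apply_eq, Matrix.conjTranspose_apply] at h
    simp only [dotProduct, Pi.star_apply, hφ, Fintype.sum_prod_type, Fin.sum_univ_two,
      star_mul']
    simpa using h
  -- the kernel bound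
  have hone : (1 : Matrix (Fin d × Fin 2) (Fin d × Fin 2) ℂ)
      = V * Matrix.diagonal (fun _ => (1 : ℂ)) * Vᴴ := by
    rw [Matrix.diagonal_one, mul_one, hVV']
  have hU1 : U - 1 = V * Matrix.diagonal (g - fun _ => 1) * Vᴴ := by
    rw [hUV, hone, conj3_sub]
  have hM2 : (U - 1)ᴴ * (U - 1)
      = V * Matrix.diagonal (star (g - fun _ => 1) * (g - fun _ => 1)) * Vᴴ := by
    rw [hU1, conj3_conjTranspose, conj3_mul V hVV]
  have hdiagval : (star (g - fun _ => (1 : ℂ)) * (g - fun _ => 1))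
      = fun n => ((2 - 2 * Real.cos (t * E n) : ℝ) : ℂ) := by
    funext n
    have hgg : (starRingEnd ℂ) (g n) * g n = 1 := by
      have := congrFun hsg n
      simpa using this
    have hgplus : g n + (starRingEnd ℂ) (g n) = 2 * Complex.cos ((t * E n : ℝ) : ℂ) := by
      have h2 : g n = Complex.exp (-((t * E n : ℝ) : ℂ) * Complex.I) := by
        show Complex.exp (-(Complex.I * (t : ℂ)) * (E n : ℂ)) = _
        congr 1; push_cast; ring
      have h1 : (starRingEnd ℂ) (g n) = Complex.exp (((t * E n : ℝ) : ℂ) * Complex.I) := by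
        rw [hgconj n]
        congr 1; push_cast; ring
      rw [h1, h2, Complex.two_cos]; ring
    simp only [Pi.mul_apply, Pi.star_apply, Pi.sub_apply]
    rw [star_sub, star_one, show (star (g n) : ℂ) = (starRingEnd ℂ) (g n) from rfl]
    have expand : ((starRingEnd ℂ) (g n) - 1) * (g n - 1)
        = (starRingEnd ℂ) (g n) * g n + 1 - (g n + (starRingEnd ℂ) (g n)) := by ring
    rw [expand, hgg, hgplus, ← Complex.ofReal_cos]
    push_cast
    ring
  set f2 : Fin d × Fin 2 → ℝ := fun n => c - (2 - 2 * Real.cos (t * E n)) with hf2def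
  have hf2 : ∀ n, 0 ≤ f2 n := by
    intro n
    have := hC2 n
    simp only [hf2def, hc]
    linarith
  have hN : Matrix.PosSemidef
      (V * Matrix.diagonal (fun n => ((f2 n : ℝ) : ℂ)) * Vᴴ) := by
    apply Matrix.PosSemidef.mul_mul_conjTranspose_same
    apply Matrix.PosSemidef.diagonal
    intro n
    show (0 : ℂ) ≤ ((f2 n : ℝ) : ℂ)
    exact_mod_cast hf2 n
  have hNid : V * Matrix.diagonal (fun n => ((f2 n : ℝ) : ℂ)) * Vᴴ
      = ((c : ℝ) : ℂ) • 1 - (U - 1)ᴴ * (U - 1) := by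
    rw [hM2, hdiagval, hone, conj3_smul, conj3_sub]
    have harg : (fun n => ((f2 n : ℝ) : ℂ))
        = ((c : ℝ) : ℂ) • (fun _ : Fin d × Fin 2 => (1 : ℂ))
          - (fun n => ((2 - 2 * Real.cos (t * E n) : ℝ) : ℂ)) := by
      funext n
      simp only [Pi.sub_apply, Pi.smul_apply, smul_eq_mul, hf2def]
      push_cast
      ring
    rw [harg]
  have hqle : ∀ i, star (φ i) ⬝ᵥ ((Uᴴ * P1 * U) *ᵥ (φ i)) ≤ ((c : ℝ) : ℂ) := by
    intro i
    have e1 : star (φ i) ⬝ᵥ ((Uᴴ * P1 * U) *ᵥ (φ i))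
        = star (P1 *ᵥ (U *ᵥ φ i)) ⬝ᵥ (P1 *ᵥ (U *ᵥ φ i)) := by
      rw [hUPU, dot_conj, ← Matrix.mulVec_mulVec]
    have e3 : P1 *ᵥ (U *ᵥ φ i) = P1 *ᵥ ((U - 1) *ᵥ φ i) := by
      rw [Matrix.sub_mulVec, Matrix.one_mulVec, Matrix.mulVec_sub, hφ0 i, sub_zero]
    have e4 := proj_contract P1 hP1herm hP1idem ((U - 1) *ᵥ φ i)
    have e5 : star ((U - 1) *ᵥ φ i) ⬝ᵥ ((U - 1) *ᵥ φ i)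
        = star (φ i) ⬝ᵥ (((U - 1)ᴴ * (U - 1)) *ᵥ φ i) := (dot_conj _ _).symm
    have e6 : star (φ i) ⬝ᵥ (((U - 1)ᴴ * (U - 1)) *ᵥ φ i)
        ≤ ((c : ℝ) : ℂ) * (star (φ i) ⬝ᵥ φ i) := by
      have h7 := hN.dotProduct_mulVec_nonneg (φ i)
      rw [hNid, Matrix.sub_mulVec, dotProduct_sub, Matrix.smul_mulVec,
        Matrix.one_mulVec, dotProduct_smul, smul_eq_mul] at h7
      exact sub_nonneg.mp h7
    rw [hφnorm i, mul_one] at e6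
    calc star (φ i) ⬝ᵥ ((Uᴴ * P1 * U) *ᵥ (φ i))
        = star (P1 *ᵥ ((U - 1) *ᵥ φ i)) ⬝ᵥ (P1 *ᵥ ((U - 1) *ᵥ φ i)) := by rw [e1, e3]
      _ ≤ star ((U - 1) *ᵥ φ i) ⬝ᵥ ((U - 1) *ᵥ φ i) := e4
      _ = star (φ i) ⬝ᵥ (((U - 1)ᴴ * (U - 1)) *ᵥ φ i) := e5
      _ ≤ ((c : ℝ) : ℂ) := e6
  -- final estimate
  have hfinal : ∑ i, (lam i : ℂ) * (star (φ i) ⬝ᵥ ((Uᴴ * P1 * U) *ᵥ (φ i)))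
      ≤ ((c : ℝ) : ℂ) * ((∑ i, max (lam i) 0 : ℝ) : ℂ) := by
    rw [Complex.ofReal_sum, Finset.mul_sum]
    apply Finset.sum_le_sum
    intro i _
    set q : ℂ := star (φ i) ⬝ᵥ ((Uᴴ * P1 * U) *ᵥ (φ i)) with hqdef
    have h0q : (0 : ℂ) ≤ q := hq0 i
    have hcq : q ≤ ((c : ℝ) : ℂ) := hqle i
    obtain ⟨hre0, him0⟩ := Complex.le_def.mp h0q
    simp only [Complex.zero_re, Complex.zero_im] at hre0 him0
    have hq_eq : q = ((q.re : ℝ) : ℂ) := by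
      apply Complex.ext
      · simp
      · simp [← him0]
    have hre_le : q.re ≤ c := by
      have := (Complex.le_def.mp hcq).1
      simpa using this
    rw [hq_eq, show (lam i : ℂ) * ((q.re : ℝ) : ℂ) = ((lam i * q.re : ℝ) : ℂ) by push_cast; ring,
      show ((c : ℝ) : ℂ) * ((max (lam i) 0 : ℝ) : ℂ) = ((c * max (lam i) 0 : ℝ) : ℂ) by
        push_cast; ring, Complex.real_le_real]
    rcases le_or_gt 0 (lam i) with h | h
    · have : max (lam i) 0 = lam i := max_eq_left h
      rw [this]
      nlinarith
    · have : max (lam i) 0 = 0 := max_eq_right h.le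
      rw [this, mul_zero]
      nlinarith
  rw [hTsum, htrPos]
  exact add_le_add le_rfl hfinal
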